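/- Let f : ℝ≥0 → ℝ be continuous. Suppose that for all real p > r > 0, q > 0, all 0 < x < y with y − x < x, and all Δ ∈ (0, y − x), one has pq(p^α + q^α)(f(x+Δ) − f(x)) + qr(q^α + r^α)(f(y−x−Δ) − f(y−x)) > 0 (for some fixed α ≥ 0). Then f is convex on ℝ≥0. -/

import Mathlib

/-- Necessity direction of Axiom 2: the Axiom 2 inequality for all admissible
configurations forces the alienation function to be convex. -/
theorem axiom2_necessity (α : ℝ) (hα : 0 ≤ α) (f : ℝ → ℝ)
    (hcont : ContinuousOn f (Set.Ici (0 : ℝ)))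
    (hax2 : ∀ p q r x y Δ : ℝ, 0 < r → r < p → 0 < q →
      0 < x → x < y → y - x < x → Δ ∈ Set.Ioo 0 (y - x) →
      p * q * (p ^ α + q ^ α) * (f (x + Δ) - f x) +
        q * r * (q ^ α + r ^ α) * (f (y - x - Δ) - f (y - x)) > 0) :
    ConvexOn ℝ (Set.Ici (0 : ℝ)) f := by
  -- Step A: the key inequality obtained by letting p → r.
  have key : ∀ a b Δ : ℝ, 0 < b → b < a → 0 < Δ → Δ < b →
      f a + f b ≤ f (a + Δ) + f (b - Δ) := by
    intro a b Δ hb hba hΔ hΔb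
    set A := f (a + Δ) - f a with hA
    set B := f (b - Δ) - f b with hB
    have hpos : ∀ t : ℝ, 1 < t → 0 < t * (t ^ α + 1) * A + 2 * B := by
      intro t ht
      have h := hax2 t 1 1 a (a + b) Δ one_pos ht one_pos
        (hb.trans hba) (by linarith) (by simpa using hba)
        (by constructor <;> [linarith; skip]; simpa using hΔb)
      have h1 : (1 : ℝ) ^ α = 1 := Real.one_rpow α
      simp only [h1] at h
      rw [show a + b - a - Δ = b - Δ from by ring] at h
      rw [show a + b - a = b from by ring] at h
      simp only [hA, hB]
      nlinarith [h]
    -- take the limit t → 1⁺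
    have hc : ContinuousAt (fun t : ℝ => t * (t ^ α + 1) * A + 2 * B) 1 := by
      have h1 : ContinuousAt (fun t : ℝ => t ^ α) 1 :=
        Real.continuousAt_rpow_const 1 α (Or.inl one_ne_zero)
      exact ((continuousAt_id.mul (h1.add continuousAt_const)).mul
        continuousAt_const).add continuousAt_const
    have htend : Filter.Tendsto (fun t : ℝ => t * (t ^ α + 1) * A + 2 * B)
        (nhdsWithin 1 (Set.Ioi 1)) (nhds (1 * ((1:ℝ) ^ α + 1) * A + 2 * B)) :=
      hc.tendsto.mono_left nhdsWithin_le_nhds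
    have hge : (0 : ℝ) ≤ 1 * ((1:ℝ) ^ α + 1) * A + 2 * B := by
      refine ge_of_tendsto htend ?_
      filter_upwards [self_mem_nhdsWithin] with t ht
      exact (hpos t ht).le
    have h1 : (1 : ℝ) ^ α = 1 := Real.one_rpow α
    rw [h1] at hge
    simp only [hA, hB] at hge
    linarith
  -- Step B: midpoint inequality for 0 < u < v.
  have midB : ∀ u v : ℝ, 0 < u → u < v → f ((u + v) / 2) ≤ (f u + f v) / 2 := by
    intro u v hu huv
    set m := (u + v) / 2 with hm
    have hm0 : 0 < m := by rw [hm]; linarith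
    have hstep : ∀ ε : ℝ, ε ∈ Set.Ioo 0 ((v - u) / 2) →
        f (m + ε) + f (m - ε) ≤ f v + f u := by
      intro ε ⟨hε0, hεlt⟩
      have h := key (m + ε) (m - ε) ((v - u) / 2 - ε)
        (by simp only [hm]; linarith) (by linarith) (by linarith)
        (by simp only [hm]; linarith)
      have e1 : m + ε + ((v - u) / 2 - ε) = v := by simp only [hm]; ring
      have e2 : m - ε - ((v - u) / 2 - ε) = u := by simp only [hm]; ring
      rw [e1, e2] at h
      linarith
    -- limit ε → 0⁺
    have hfm : ContinuousAt f m := hcont.continuousAt (Ici_mem_nhds hm0)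
    have ht1 : Filter.Tendsto (fun ε : ℝ => f (m + ε) + f (m - ε))
        (nhdsWithin 0 (Set.Ioi 0)) (nhds (f m + f m)) := by
      have ha : Filter.Tendsto (fun ε : ℝ => m + ε) (nhds 0) (nhds m) := by
        exact ((continuous_const (y := m)).add continuous_id).tendsto' 0 m (by simp)
      have hb : Filter.Tendsto (fun ε : ℝ => m - ε) (nhds 0) (nhds m) := by
        exact ((continuous_const (y := m)).sub continuous_id).tendsto' 0 m (by simp)
      exact ((hfm.tendsto.comp ha).add (hfm.tendsto.comp hb)).mono_left
        nhdsWithin_le_nhds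
    have hle : f m + f m ≤ f v + f u := by
      refine le_of_tendsto ht1 ?_
      filter_upwards [Filter.mem_of_superset
        (Ioo_mem_nhdsGT_of_mem (by constructor <;> linarith : (0:ℝ) ∈ Set.Ico 0 ((v-u)/2)))
        (Set.Subset.refl _)] with ε hε
      exact hstep ε hε
    linarith
  -- Step C: midpoint inequality with left endpoint 0.
  have midC : ∀ v : ℝ, 0 < v → f (v / 2) ≤ (f 0 + f v) / 2 := by
    intro v hv
    have ht1 : Filter.Tendsto (fun u : ℝ => f ((u + v) / 2))
        (nhdsWithin 0 (Set.Ioi 0)) (nhds (f (v / 2))) := by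
      have hfm : ContinuousAt f (v / 2) :=
        hcont.continuousAt (Ici_mem_nhds (by positivity))
      have ha : Filter.Tendsto (fun u : ℝ => (u + v) / 2) (nhds 0) (nhds (v / 2)) := by
        have : Filter.Tendsto (fun u : ℝ => (u + v) / 2) (nhds 0)
            (nhds ((0 + v) / 2)) :=
          ((continuous_id.add continuous_const).div_const 2).tendsto (0 : ℝ)
        simpa using this
      exact (hfm.tendsto.comp ha).mono_left nhdsWithin_le_nhds
    have ht2 : Filter.Tendsto (fun u : ℝ => (f u + f v) / 2)
        (nhdsWithin 0 (Set.Ioi 0)) (nhds ((f 0 + f v) / 2)) := by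
      have hf0 : Filter.Tendsto f (nhdsWithin 0 (Set.Ici 0)) (nhds (f 0)) :=
        hcont 0 (Set.self_mem_Ici)
      have hf0' : Filter.Tendsto f (nhdsWithin 0 (Set.Ioi 0)) (nhds (f 0)) :=
        hf0.mono_left (nhdsWithin_mono _ Set.Ioi_subset_Ici_self)
      exact (hf0'.add tendsto_const_nhds).div_const 2
    refine le_of_tendsto_of_tendsto ht1 ht2 ?_
    filter_upwards [Filter.mem_of_superset
      (Ioo_mem_nhdsGT_of_mem (by constructor <;> linarith : (0:ℝ) ∈ Set.Ico 0 v))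
      (Set.Subset.refl _)] with u hu
    exact midB u v hu.1 hu.2
  -- Step D: midpoint inequality on all of Ici 0.
  have mid : ∀ u v : ℝ, 0 ≤ u → u ≤ v → f ((u + v) / 2) ≤ (f u + f v) / 2 := by
    intro u v hu huv
    rcases eq_or_lt_of_le huv with rfl | hlt
    · have : (u + u) / 2 = u := by ring
      rw [this]; linarith
    rcases eq_or_lt_of_le hu with rfl | hu0
    · have : ((0:ℝ) + v) / 2 = v / 2 := by ring
      rw [this]; exact midC v hlt
    · exact midB u v hu0 hlt
  -- Step E: midpoint convexity + continuity ⇒ convexity, via a maximum argument.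
  refine ⟨convex_Ici 0, ?_⟩
  suffices H : ∀ x y : ℝ, 0 ≤ x → x ≤ y → ∀ a b : ℝ, 0 ≤ a → 0 ≤ b → a + b = 1 →
      f (a * x + b * y) ≤ a * f x + b * f y by
    intro x hx y hy a b ha hb hab
    simp only [smul_eq_mul]
    rcases le_total x y with h | h
    · exact H x y hx h a b ha hb hab
    · have := H y x hy h b a hb ha (by linarith)
      calc f (a * x + b * y) = f (b * y + a * x) := by ring_nf
        _ ≤ b * f y + a * f x := this
        _ = a * f x + b * f y := by ring
  intro x y hx hxy a b ha hb hab
  rcases eq_or_lt_of_le hxy with rfl | hlt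
  · have h1 : a * x + b * x = x := by rw [← add_mul, hab, one_mul]
    rw [h1]
    have h2 : a * f x + b * f x = f x := by rw [← add_mul, hab, one_mul]
    linarith
  -- x < y : use the chord function.
  have hyx : (0:ℝ) < y - x := by linarith
  set L : ℝ → ℝ := fun t => f x + (f y - f x) / (y - x) * (t - x) with hL
  set g : ℝ → ℝ := fun t => f t - L t with hg
  clear_value L g
  have hIcc : Set.Icc x y ⊆ Set.Ici (0 : ℝ) := fun t ht => le_trans hx ht.1
  have hgc : ContinuousOn g (Set.Icc x y) := by
    simp only [hg, hL]
    exact (hcont.mono hIcc).sub (continuous_const.add (continuous_const.mul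
      (continuous_id.sub continuous_const))).continuousOn
  have hgx : g x = 0 := by simp [hg, hL]
  have hgy : g y = 0 := by
    simp only [hg, hL]
    field_simp
    ring
  -- g ≤ 0 on Icc x y
  have hneg : ∀ t ∈ Set.Icc x y, g t ≤ 0 := by
    by_contra hcon
    push_neg at hcon
    obtain ⟨t₀, ht₀, ht₀pos⟩ := hcon
    obtain ⟨w, hw, hwmax⟩ := isCompact_Icc.exists_isMaxOn
      ⟨x, Set.left_mem_Icc.mpr hxy⟩ hgc
    set M := g w with hM
    have hMpos : 0 < M := lt_of_lt_of_le ht₀pos (hwmax ht₀)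
    set S : Set ℝ := Set.Icc x y ∩ g ⁻¹' {M} with hS
    have hScl : IsClosed S :=
      hgc.preimage_isClosed_of_isClosed isClosed_Icc isClosed_singleton
    have hScomp : IsCompact S :=
      isCompact_Icc.of_isClosed_subset hScl Set.inter_subset_left
    have hSne : S.Nonempty := ⟨w, hw, rfl⟩
    set t := sSup S with htdef
    have htS : t ∈ S := hScomp.sSup_mem hSne
    obtain ⟨htIcc, htM⟩ := htS
    have htM' : g t = M := htM
    have htx : x < t := by
      rcases lt_or_eq_of_le htIcc.1 with h | h
      · exact h
      · exfalso; rw [← h, hgx] at htM'; linarith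
    have hty : t < y := by
      rcases lt_or_eq_of_le htIcc.2 with h | h
      · exact h
      · exfalso; rw [h, hgy] at htM'; linarith
    set δ := min (t - x) (y - t) with hδ
    have hδpos : 0 < δ := lt_min (by linarith) (by linarith)
    have hδ1 : δ ≤ t - x := min_le_left _ _
    have hδ2 : δ ≤ y - t := min_le_right _ _
    have hmem1 : t - δ ∈ Set.Icc x y := ⟨by linarith, by linarith⟩
    have hmem2 : t + δ ∈ Set.Icc x y := ⟨by linarith, by linarith⟩
    have hmid : f ((t - δ + (t + δ)) / 2) ≤ (f (t - δ) + f (t + δ)) / 2 :=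
      mid (t - δ) (t + δ) (le_trans hx hmem1.1) (by linarith)
    have hmt : (t - δ + (t + δ)) / 2 = t := by ring
    rw [hmt] at hmid
    have hLaff : L t = (L (t - δ) + L (t + δ)) / 2 := by
      simp only [hL]; ring
    have hgmid : g t ≤ (g (t - δ) + g (t + δ)) / 2 := by
      simp only [hg]; linarith [hmid, hLaff]
    have h1 : g (t - δ) ≤ M := hwmax hmem1
    have hle2 : g (t + δ) ≤ M := hwmax hmem2
    have h2 : g (t + δ) < M := by
      rcases lt_or_eq_of_le hle2 with h | h
      · exact h
      · exfalso
        have hmemS : t + δ ∈ S := ⟨hmem2, h⟩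
        have hts : t + δ ≤ sSup S := le_csSup hScomp.bddAbove hmemS
        rw [← htdef] at hts
        linarith
    rw [htM'] at hgmid
    linarith
  -- conclude
  set z := a * x + b * y with hz
  have hzIcc : z ∈ Set.Icc x y := by
    constructor
    · nlinarith
    · nlinarith
  have hgz := hneg z hzIcc
  have hLz : L z = a * f x + b * f y := by
    simp only [hL, hz]
    have ha1 : a = 1 - b := by linarith
    subst ha1
    field_simp
    ring
  simp only [hg] at hgz
  linarith [hgz, hLz]
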